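/- Let L and M be complete lattices and φ : L → M a map that preserves arbitrary suprema, binary infima, and the top element. Let X be a set, n a natural number, and R : (Fin n → X) → X → Prop an (n+1)-ary relation on X. Then for all α : Fin n → (X → L) and all x ∈ X, φ (f_R^L α x) = f_R^M (fun k => φ ∘ α k) x, where f_R^L and f_R^M denote the convolution operations over L and M respectively. That is, composition with φ is a homomorphism from the convolution algebra over L to the convolution algebra over M. -/

import Mathlib

/-- The convolution operation of an `(n+1)`-ary relation `R` on `X` over a complete
lattice `L`. -/
def conv {X L : Type*} [CompleteLattice L] {n : ℕ}
    (R : (Fin n → X) → X → Prop) (α : Fin n → X → L) : X → L :=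
  fun x => ⨆ (v : Fin n → X) (_ : R v x), ⨅ k, α k (v k)

theorem aux_iSup {L M : Type*} [CompleteLattice L] [CompleteLattice M] (φ : L → M)
    (hsup : ∀ s : Set L, φ (sSup s) = sSup (φ '' s))
    {ι : Sort*} (f : ι → L) : φ (⨆ i, f i) = ⨆ i, φ (f i) := by
  rw [iSup, hsup, ← Set.range_comp, iSup]
  rfl

theorem aux_finset {L M : Type*} [CompleteLattice L] [CompleteLattice M] (φ : L → M)
    (hinf : ∀ a b : L, φ (a ⊓ b) = φ a ⊓ φ b)
    (htop : φ ⊤ = ⊤) {ι : Type*} (s : Finset ι) (f : ι → L) :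
    φ (s.inf f) = s.inf (φ ∘ f) := by
  classical
  induction s using Finset.induction_on with
  | empty => simpa using htop
  | insert _ _ h ih => simp [hinf, ih]

/-- If `φ : L → M` preserves arbitrary suprema, binary infima and the top element, then
composition with `φ` is a homomorphism between the corresponding convolution algebras. -/
theorem stmt_3 {L M : Type*} [CompleteLattice L] [CompleteLattice M] (φ : L → M)
    (hsup : ∀ s : Set L, φ (sSup s) = sSup (φ '' s))
    (hinf : ∀ a b : L, φ (a ⊓ b) = φ a ⊓ φ b)
    (htop : φ ⊤ = ⊤)
    {X : Type*} {n : ℕ} (R : (Fin n → X) → X → Prop)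
    (α : Fin n → X → L) (x : X) :
    φ (conv R α x) = conv R (fun k => φ ∘ α k) x := by
  unfold conv
  rw [aux_iSup φ hsup]
  congr 1
  funext v
  rw [aux_iSup φ hsup]
  congr 1
  funext hv
  have h1 : (⨅ k, α k (v k)) = Finset.univ.inf (fun k => α k (v k)) := by
    simp [Finset.inf_eq_iInf]
  have h2 : (⨅ k, φ (α k (v k))) = Finset.univ.inf (fun k => φ (α k (v k))) := by
    simp [Finset.inf_eq_iInf]
  rw [h1, aux_finset φ hinf htop]
  simp [Finset.inf_eq_iInf]
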